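/- For every x ∈ [-α,1]ⁿ, there exists a probability distribution λ on Dⁿ (D = {-α,0,1}) with marginals x (i.e., Σ_{a∈Dⁿ} λ(a)·a = x) whose support forms a chain in Dⁿ with respect to the componentwise order induced by 0 ≺ 1, 0 ≺ -α. -/

import Mathlib

open Finset

/-- The three-element domain `D = {-α, 0, 1}`, abstractly. -/
inductive D3 : Type
  | neg : D3
  | zero : D3
  | one : D3
deriving DecidableEq

instance : Fintype D3 :=
  ⟨{D3.neg, D3.zero, D3.one}, by rintro (_ | _ | _) <;> simp⟩

namespace D3

/-- The embedding of `D3` into `ℝ` sending `neg ↦ -α`, `zero ↦ 0`, `one ↦ 1`. -/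
def emb (α : ℝ) : D3 → ℝ
  | neg => -α
  | zero => 0
  | one => 1

/-- The partial order `0 ≺ 1`, `0 ≺ -α`, with `1` and `-α` incomparable. -/
instance : PartialOrder D3 where
  le x y := x = y ∨ x = zero
  le_refl x := Or.inl rfl
  le_trans x y z hxy hyz := by
    rcases hxy with rfl | rfl
    · exact hyz
    · exact Or.inr rfl
  le_antisymm x y hxy hyx := by
    rcases hxy with rfl | rfl
    · rfl
    · rcases hyx with rfl | rfl <;> rfl

/-- `∧₀` : `1 ∧₀ (-α) = (-α) ∧₀ 1 = 0`, and min w.r.t. `≺` otherwise. -/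
def meet0 (x y : D3) : D3 := if x = y then x else zero

/-- `∨₀` : `1 ∨₀ (-α) = (-α) ∨₀ 1 = 0`, and max w.r.t. `≺` otherwise. -/
def join0 (x y : D3) : D3 :=
  if x = y then x else if x = zero then y else if y = zero then x else zero

/-- `∨₁` : `1 ∨₁ (-α) = (-α) ∨₁ 1 = 1`, and max w.r.t. `≺` otherwise. -/
def join1 (x y : D3) : D3 :=
  if x = y then x else if x = zero then y else if y = zero then x else one

end D3

/-- Componentwise `∧₀` on `Dⁿ`. -/
def vmeet0 {n : ℕ} (a b : Fin n → D3) : Fin n → D3 := fun i => D3.meet0 (a i) (b i)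

/-- Componentwise `∨₀` on `Dⁿ`. -/
def vjoin0 {n : ℕ} (a b : Fin n → D3) : Fin n → D3 := fun i => D3.join0 (a i) (b i)

/-- Componentwise `∨₁` on `Dⁿ`. -/
def vjoin1 {n : ℕ} (a b : Fin n → D3) : Fin n → D3 := fun i => D3.join1 (a i) (b i)

/-- `lam` is a probability distribution on `Dⁿ`. -/
def IsDist (n : ℕ) (lam : (Fin n → D3) → ℝ) : Prop :=
  (∀ a, 0 ≤ lam a ∧ lam a ≤ 1) ∧ ∑ a : Fin n → D3, lam a = 1

/-- `lam` has marginal vector `x`, i.e. `Σ_a lam(a)·a = x` in `ℝⁿ`. -/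
def HasMarginal (α : ℝ) (n : ℕ) (lam : (Fin n → D3) → ℝ) (x : Fin n → ℝ) : Prop :=
  ∀ i, ∑ a : Fin n → D3, lam a * D3.emb α (a i) = x i

/-- The support of `lam` forms a chain w.r.t. the componentwise order on `Dⁿ`. -/
def ChainSupp (n : ℕ) (lam : (Fin n → D3) → ℝ) : Prop :=
  ∀ a b : Fin n → D3, lam a ≠ 0 → lam b ≠ 0 → a ≤ b ∨ b ≤ a

/-- The box `[-α,1]ⁿ`. -/
def Box (α : ℝ) (n : ℕ) : Set (Fin n → ℝ) := {x | ∀ i, x i ∈ Set.Icc (-α) 1}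

/-- `f : Dⁿ → ℝ` is α-bisubmodular. -/
def AlphaBisub (α : ℝ) (n : ℕ) (f : (Fin n → D3) → ℝ) : Prop :=
  ∀ a b : Fin n → D3,
    f (vmeet0 a b) + α * f (vjoin0 a b) + (1 - α) * f (vjoin1 a b) ≤ f a + f b

/-- Number of zero coordinates. -/
def zc {n : ℕ} (c : Fin n → D3) : ℕ := (Finset.univ.filter fun i => c i = D3.zero).card

/-- The convex closure `f⁻(x)`. -/
noncomputable def cClos (α : ℝ) (n : ℕ) (f : (Fin n → D3) → ℝ) (x : Fin n → ℝ) : ℝ :=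
  sInf {y | ∃ lam, IsDist n lam ∧ HasMarginal α n lam x ∧ y = ∑ a : Fin n → D3, lam a * f a}
lemma pm_sum {n : ℕ} (c : Fin n → D3) (f : (Fin n → D3) → ℝ) :
    ∑ a : Fin n → D3, (if a = c then (1 : ℝ) else 0) * f a = f c := by
  rw [Finset.sum_congr rfl (fun a _ => by rw [ite_mul, one_mul, zero_mul])]
  simp

/-- Key lemma: chain-supported distribution with marginal `t i * emb α (s i)`,
proved by induction on the number of nonzero coordinates of `t`. -/
lemma key (α : ℝ) (n : ℕ) (s : Fin n → D3) :
    ∀ k : ℕ, ∀ t : Fin n → ℝ, (∀ i, 0 ≤ t i ∧ t i ≤ 1) →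
      (Finset.univ.filter fun i => t i ≠ 0).card ≤ k →
      ∃ lam : (Fin n → D3) → ℝ,
        (∀ a, 0 ≤ lam a) ∧ (∑ a : Fin n → D3, lam a = 1) ∧
        (∀ i, ∑ a : Fin n → D3, lam a * D3.emb α (a i) = t i * D3.emb α (s i)) ∧
        ChainSupp n lam ∧
        (∀ a, lam a ≠ 0 → ∀ i, (a i = s i ∧ t i ≠ 0) ∨ a i = D3.zero) := by
  intro k
  induction k with
  | zero =>
    intro t ht hcard
    have hall : ∀ i, t i = 0 := by
      intro i
      by_contra h
      have : i ∈ Finset.univ.filter fun i => t i ≠ 0 := by simp [h]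
      have := Finset.card_pos.mpr ⟨i, this⟩
      omega
    refine ⟨fun a => if a = (fun _ => D3.zero) then 1 else 0, ?_, ?_, ?_, ?_, ?_⟩
    · intro a; positivity
    · simp
    · intro i
      rw [pm_sum]
      simp [D3.emb, hall i]
    · intro a b ha hb
      have ha' : a = fun _ => D3.zero := by by_contra h; simp [h] at ha
      have hb' : b = fun _ => D3.zero := by by_contra h; simp [h] at hb
      subst ha' hb'; exact Or.inl le_rfl
    · intro a ha i
      have ha' : a = fun _ => D3.zero := by by_contra h; simp [h] at ha
      subst ha'; exact Or.inr rfl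
  | succ k IH =>
    intro t ht hcard
    classical
    by_cases hS : (Finset.univ.filter fun i => t i ≠ 0).Nonempty
    · obtain ⟨i0, hi0mem, hmin⟩ := Finset.exists_min_image _ t hS
      set m := t i0 with hm
      have hi0 : t i0 ≠ 0 := (Finset.mem_filter.mp hi0mem).2
      have hm0 : 0 < m := lt_of_le_of_ne (ht i0).1 (Ne.symm hi0)
      have hm1 : m ≤ 1 := (ht i0).2
      have hminle : ∀ j, t j ≠ 0 → m ≤ t j := by
        intro j hj; exact hmin j (by simp [hj])
      set L0 : Fin n → D3 := fun i => if t i = 0 then D3.zero else s i with hL0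
      have hembL0 : ∀ i, t i ≠ 0 → m = 1 → D3.emb α (L0 i) = t i * D3.emb α (s i) := by
        intro i hi hm1'
        have h1 : t i = 1 := le_antisymm (ht i).2 (hm1' ▸ hminle i hi)
        simp [hL0, hi, h1]
      by_cases hme : m = 1
      · -- point mass at L0
        refine ⟨fun a => if a = L0 then 1 else 0, ?_, ?_, ?_, ?_, ?_⟩
        · intro a; positivity
        · simp
        · intro i
          rw [pm_sum]
          by_cases hi : t i = 0
          · simp [hL0, hi, D3.emb]
          · exact hembL0 i hi hme
        · intro a b ha hb
          have ha' : a = L0 := by by_contra h; simp [h] at ha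
          have hb' : b = L0 := by by_contra h; simp [h] at hb
          subst ha' hb'; exact Or.inl le_rfl
        · intro a ha i
          have ha' : a = L0 := by by_contra h; simp [h] at ha
          subst ha'
          by_cases hi : t i = 0
          · exact Or.inr (by simp [hL0, hi])
          · exact Or.inl ⟨by simp [hL0, hi], hi⟩
      · -- m < 1 : recurse
        have hm1' : m < 1 := lt_of_le_of_ne hm1 hme
        have h1m : 0 < 1 - m := by linarith
        set t' : Fin n → ℝ := fun i => if t i = 0 then 0 else (t i - m) / (1 - m) with ht'
        have ht'b : ∀ i, 0 ≤ t' i ∧ t' i ≤ 1 := by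
          intro i
          by_cases hi : t i = 0
          · simp [ht', hi]
          · constructor
            · simp only [ht', hi, if_false]
              apply div_nonneg _ (le_of_lt h1m)
              linarith [hminle i hi]
            · simp only [ht', hi, if_false]
              rw [div_le_one h1m]
              linarith [(ht i).2]
        have ht'i0 : t' i0 = 0 := by simp [ht', hi0, hm]
        have hsubset : (Finset.univ.filter fun i => t' i ≠ 0) ⊆
            (Finset.univ.filter fun i => t i ≠ 0).erase i0 := by
          intro j hj
          have hj' : t' j ≠ 0 := (Finset.mem_filter.mp hj).2
          have htj : t j ≠ 0 := by
            intro h; apply hj'; simp [ht', h]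
          refine Finset.mem_erase.mpr ⟨?_, by simp [htj]⟩
          intro h; subst h; exact hj' ht'i0
        have hcard' : (Finset.univ.filter fun i => t' i ≠ 0).card ≤ k := by
          have h1 := Finset.card_le_card hsubset
          have h2 := Finset.card_erase_of_mem hi0mem
          omega
        obtain ⟨lam', hnn', hsum', hmar', hch', hinv'⟩ := IH t' ht'b hcard'
        refine ⟨fun a => (if a = L0 then m else 0) + (1 - m) * lam' a, ?_, ?_, ?_, ?_, ?_⟩
        · intro a
          apply add_nonneg
          · split
            · exact hm0.le
            · exact le_rfl
          · exact mul_nonneg h1m.le (hnn' a)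
        · rw [Finset.sum_add_distrib, ← Finset.mul_sum, hsum']
          simp
        · intro i
          have expand : ∀ a : Fin n → D3,
              ((if a = L0 then m else 0) + (1 - m) * lam' a) * D3.emb α (a i)
              = (if a = L0 then (1:ℝ) else 0) * (m * D3.emb α (a i))
                + (1 - m) * (lam' a * D3.emb α (a i)) := by
            intro a; by_cases h : a = L0 <;> simp [h] <;> ring
          rw [Finset.sum_congr rfl (fun a _ => expand a), Finset.sum_add_distrib,
            ← Finset.mul_sum, hmar' i, pm_sum]
          by_cases hi : t i = 0
          · simp [hL0, hi, ht', D3.emb]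
          · have : L0 i = s i := by simp [hL0, hi]
            rw [this]
            simp only [ht', hi, if_false]
            field_simp
            ring
        · -- chain
          have hle : ∀ a, lam' a ≠ 0 → a ≤ L0 := by
            intro a ha
            rw [Pi.le_def]
            intro i
            rcases hinv' a ha i with ⟨h1, h2⟩ | h1
            · have hti : t i ≠ 0 := by
                intro h; apply h2; simp [ht', h]
              left; rw [h1]; simp [hL0, hti]
            · right; exact h1
          intro a b ha hb
          have hcases : ∀ c : Fin n → D3,
              ((if c = L0 then m else 0) + (1 - m) * lam' c) ≠ 0 →
              c = L0 ∨ lam' c ≠ 0 := by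
            intro c hc
            by_cases h : c = L0
            · exact Or.inl h
            · right
              intro h'
              apply hc
              simp [h, h']
          rcases hcases a ha with ha' | ha' <;> rcases hcases b hb with hb' | hb'
          · rw [ha', hb']; exact Or.inl le_rfl
          · rw [ha']; exact Or.inr (hle b hb')
          · rw [hb']; exact Or.inl (hle a ha')
          · exact hch' a b ha' hb'
        · -- invariant
          intro a ha i
          have hcases : a = L0 ∨ lam' a ≠ 0 := by
            by_cases h : a = L0
            · exact Or.inl h
            · right; intro h'; apply ha; simp [h, h']
          rcases hcases with rfl | ha'
          · by_cases hi : t i = 0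
            · exact Or.inr (by simp [hL0, hi])
            · exact Or.inl ⟨by simp [hL0, hi], hi⟩
          · rcases hinv' a ha' i with ⟨h1, h2⟩ | h1
            · have hti : t i ≠ 0 := by intro h; apply h2; simp [ht', h]
              exact Or.inl ⟨h1, hti⟩
            · exact Or.inr h1
    · -- t ≡ 0
      have hall : ∀ i, t i = 0 := by
        intro i
        by_contra h
        exact hS ⟨i, by simp [h]⟩
      refine ⟨fun a => if a = (fun _ => D3.zero) then 1 else 0, ?_, ?_, ?_, ?_, ?_⟩
      · intro a; positivity
      · simp
      · intro i
        rw [pm_sum]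
        simp [D3.emb, hall i]
      · intro a b ha hb
        have ha' : a = fun _ => D3.zero := by by_contra h; simp [h] at ha
        have hb' : b = fun _ => D3.zero := by by_contra h; simp [h] at hb
        subst ha' hb'; exact Or.inl le_rfl
      · intro a ha i
        have ha' : a = fun _ => D3.zero := by by_contra h; simp [h] at ha
        subst ha'; exact Or.inr rfl

/-- existence of a chain-supported distribution with marginals `x`. -/
theorem stmt1 (α : ℝ) (hα : α ∈ Set.Ioc (0 : ℝ) 1) (n : ℕ) (x : Fin n → ℝ)
    (hx : x ∈ Box α n) :
    ∃ lam : (Fin n → D3) → ℝ, IsDist n lam ∧ HasMarginal α n lam x ∧ ChainSupp n lam := by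
  classical
  obtain ⟨hα0, hα1⟩ := hα
  set s : Fin n → D3 := fun i => if 0 ≤ x i then D3.one else D3.neg with hs
  set t : Fin n → ℝ := fun i => if 0 ≤ x i then x i else x i / (-α) with ht
  have htb : ∀ i, 0 ≤ t i ∧ t i ≤ 1 := by
    intro i
    obtain ⟨hx1, hx2⟩ := hx i
    by_cases h : 0 ≤ x i
    · simp only [ht, if_pos h]; exact ⟨h, hx2⟩
    · push_neg at h
      simp only [ht, h.not_ge, if_false]
      refine ⟨div_nonneg_iff.mpr (Or.inr ⟨h.le, by linarith⟩), ?_⟩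
      rw [div_le_one_iff]
      exact Or.inr (Or.inr ⟨by linarith, by linarith⟩)
  have hts : ∀ i, t i * D3.emb α (s i) = x i := by
    intro i
    by_cases h : 0 ≤ x i
    · simp [ht, hs, h, D3.emb]
    · simp only [ht, hs, h, if_false, D3.emb]
      field_simp
  obtain ⟨lam, hnn, hsum, hmar, hch, _⟩ :=
    key α n s ((Finset.univ.filter fun i => t i ≠ 0).card) t htb le_rfl
  refine ⟨lam, ⟨fun a => ⟨hnn a, ?_⟩, hsum⟩, fun i => by rw [hmar i, hts i], hch⟩
  calc lam a ≤ ∑ b : Fin n → D3, lam b :=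
        Finset.single_le_sum (fun b _ => hnn b) (Finset.mem_univ a)
    _ = 1 := hsum
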